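/- Suppose F is β-smooth (β > 0) and satisfies the α-PL condition (α > 0) with minimum value F*. Let c > 0 and M_U > 0, let w ∈ ℝ^d satisfy F(w) > F* and M²(w) ≤ M_U², let the step size be γ = α/(β·(α + M_U²/(2c))), and let the batch size B ≥ 1 satisfy B ≥ c/(F(w) − F*). Then one step of mini-batch SGD contracts the expected suboptimality: E_s[F(w − γ g_s(w))] − F* ≤ (1 − α²/(β·(α + M_U²/(2c))))·(F(w) − F*). -/

import Mathlib

open scoped BigOperators RealInnerProductSpace

section Aux

variable {E : Type*} [NormedAddCommGroup E] [InnerProductSpace ℝ E]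

lemma adaptive_aux_sum_succ_split {n B : ℕ} (g : (Fin (B+1) → Fin n) → E) :
    ∑ s : Fin (B+1) → Fin n, g s
      = ∑ a : Fin n, ∑ t : Fin B → Fin n, g (Fin.cons (α := fun _ => Fin n) a t) := by
  rw [← Fintype.sum_equiv (Fin.consEquiv fun _ => Fin n)
      (fun p => g (Fin.cons (α := fun _ => Fin n) p.1 p.2)) g (fun p => rfl),
    Fintype.sum_prod_type]

lemma adaptive_aux_tuple_sum_first (n : ℕ) (B : ℕ) (X : Fin n → E) :
    ∑ s : Fin B → Fin n, ∑ j, X (s j)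
      = ((B : ℝ) * (n : ℝ) ^ B / (n : ℝ)) • ∑ a, X a := by
  induction B with
  | zero => simp
  | succ B ih =>
    rcases Nat.eq_zero_or_pos n with hn | hn
    · subst hn; simp
    have hn' : (n : ℝ) ≠ 0 := by positivity
    rw [adaptive_aux_sum_succ_split (fun s => ∑ j, X (s j))]
    have : ∀ (a : Fin n) (t : Fin B → Fin n),
        ∑ j : Fin (B+1), X (Fin.cons (α := fun _ => Fin n) a t j) = X a + ∑ j : Fin B, X (t j) := by
      intro a t
      rw [Fin.sum_univ_succ]
      simp
    simp_rw [this, Finset.sum_add_distrib, ih]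
    simp only [Finset.sum_const, Finset.card_univ, Fintype.card_fun, Fintype.card_fin,
      ← Nat.cast_smul_eq_nsmul ℝ, smul_smul]
    rw [← Finset.smul_sum, ← add_smul]
    congr 1
    push_cast
    field_simp
    ring

lemma adaptive_aux_tuple_sum_normsq (n : ℕ) (B : ℕ) (X : Fin n → E) :
    ∑ s : Fin B → Fin n, ‖∑ j, X (s j)‖ ^ 2
      = (n : ℝ) ^ B * (((B : ℝ) / n) * ∑ a, ‖X a‖ ^ 2
          + ((B : ℝ) * ((B : ℝ) - 1) / (n : ℝ) ^ 2) * ‖∑ a, X a‖ ^ 2) := by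
  induction B with
  | zero => simp
  | succ B ih =>
    rcases Nat.eq_zero_or_pos n with hn | hn
    · subst hn; simp
    have hn' : (n : ℝ) ≠ 0 := by positivity
    rw [adaptive_aux_sum_succ_split (fun s => ‖∑ j, X (s j)‖ ^ 2)]
    have hsplit : ∀ (a : Fin n) (t : Fin B → Fin n),
        ∑ j : Fin (B+1), X (Fin.cons (α := fun _ => Fin n) a t j)
          = X a + ∑ j : Fin B, X (t j) := by
      intro a t
      rw [Fin.sum_univ_succ]
      simp
    have hexp : ∀ (a : Fin n) (t : Fin B → Fin n),
        ‖∑ j : Fin (B+1), X (Fin.cons (α := fun _ => Fin n) a t j)‖ ^ 2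
          = ‖X a‖ ^ 2 + 2 * ⟪X a, ∑ j : Fin B, X (t j)⟫ + ‖∑ j : Fin B, X (t j)‖ ^ 2 := by
      intro a t
      rw [hsplit]
      exact norm_add_sq_real _ _
    simp_rw [hexp, Finset.sum_add_distrib, ih]
    have h2 : ∑ a : Fin n, ∑ t : Fin B → Fin n, 2 * ⟪X a, ∑ j : Fin B, X (t j)⟫
        = 2 * ((B : ℝ) * (n : ℝ) ^ B / n) * ‖∑ a, X a‖ ^ 2 := by
      have : ∀ a : Fin n, ∑ t : Fin B → Fin n, 2 * ⟪X a, ∑ j : Fin B, X (t j)⟫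
          = 2 * ⟪X a, ((B : ℝ) * (n : ℝ) ^ B / n) • ∑ b, X b⟫ := by
        intro a
        rw [← Finset.mul_sum, ← inner_sum, adaptive_aux_tuple_sum_first]
      simp_rw [this, real_inner_smul_right, ← Finset.mul_sum, ← sum_inner,
        real_inner_self_eq_norm_sq]
      ring
    rw [h2]
    simp only [Finset.sum_const, Finset.card_univ, Fintype.card_fun, Fintype.card_fin]
    simp only [nsmul_eq_mul, ← Finset.mul_sum]
    push_cast
    field_simp
    ring

end Aux

section Descent

variable {E : Type*} [NormedAddCommGroup E] [InnerProductSpace ℝ E] [CompleteSpace E]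

lemma adaptive_aux_descent
    (F : E → ℝ) (hFdiff : Differentiable ℝ F) (β : ℝ) (hβ : 0 < β)
    (hsmooth : ∀ x y, ‖gradient F x - gradient F y‖ ≤ β * ‖x - y‖)
    (x v : E) :
    F (x + v) ≤ F x + ⟪gradient F x, v⟫ + β / 2 * ‖v‖ ^ 2 := by
  have hgradcont : Continuous (gradient F) := by
    have : LipschitzWith β.toNNReal (gradient F) := by
      apply LipschitzWith.of_dist_le_mul
      intro a b
      simpa [dist_eq_norm, Real.coe_toNNReal _ hβ.le] using hsmooth a b
    exact this.continuous
  set φ' : ℝ → ℝ := fun t => ⟪gradient F (x + t • v), v⟫ with hφ'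
  have hline : ∀ t : ℝ, HasDerivAt (fun t : ℝ => x + t • v) v t := by
    intro t
    simpa using ((hasDerivAt_id t).smul_const v).const_add x
  have hderiv : ∀ t : ℝ, HasDerivAt (fun t : ℝ => F (x + t • v)) (φ' t) t := by
    intro t
    have h1 : HasFDerivAt F ((InnerProductSpace.toDual ℝ E) (gradient F (x + t • v)))
        (x + t • v) := (hFdiff _).hasGradientAt.hasFDerivAt
    have := h1.comp_hasDerivAt t (hline t)
    exact this
  have hcont : Continuous φ' := by
    apply Continuous.inner
    · exact hgradcont.comp (by continuity)
    · exact continuous_const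
  have hFTC : F (x + v) - F x = ∫ t in (0:ℝ)..1, φ' t := by
    have := intervalIntegral.integral_eq_sub_of_hasDerivAt (f := fun t : ℝ => F (x + t • v))
      (f' := φ') (a := 0) (b := 1) (fun t _ => hderiv t)
      (hcont.intervalIntegrable 0 1)
    rw [this]
    norm_num
  have hbound : ∀ t ∈ Set.Icc (0:ℝ) 1, φ' t ≤ φ' 0 + β * ‖v‖ ^ 2 * t := by
    intro t ht
    have h1 : φ' t - φ' 0 ≤ ‖gradient F (x + t • v) - gradient F (x + (0:ℝ) • v)‖ * ‖v‖ := by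
      rw [hφ']
      have := real_inner_le_norm (gradient F (x + t • v) - gradient F (x + (0:ℝ) • v)) v
      simpa [inner_sub_left] using this
    have h2 : ‖gradient F (x + t • v) - gradient F (x + (0:ℝ) • v)‖ ≤ β * (t * ‖v‖) := by
      have := hsmooth (x + t • v) (x + (0:ℝ) • v)
      have he : x + t • v - (x + (0:ℝ) • v) = t • v := by module
      rw [he] at this
      simpa [norm_smul, abs_of_nonneg ht.1] using this
    nlinarith [norm_nonneg v, ht.1]
  have hint : ∫ t in (0:ℝ)..1, φ' t ≤ ∫ t in (0:ℝ)..1, (φ' 0 + β * ‖v‖ ^ 2 * t) := by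
    apply intervalIntegral.integral_mono_on (by norm_num)
      (hcont.intervalIntegrable 0 1) (by apply Continuous.intervalIntegrable; continuity)
    exact hbound
  have hval : ∫ t in (0:ℝ)..1, (φ' 0 + β * ‖v‖ ^ 2 * t) = φ' 0 + β / 2 * ‖v‖ ^ 2 := by
    rw [intervalIntegral.integral_add (by apply Continuous.intervalIntegrable; continuity)
      (by apply Continuous.intervalIntegrable; continuity)]
    rw [intervalIntegral.integral_const_mul, integral_id]
    simp
    ring
  have hφ'0 : φ' 0 = ⟪gradient F x, v⟫ := by simp [φ']
  nlinarith [hFTC, hint, hval, hφ'0]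

lemma adaptive_aux_gradient_avg (n : ℕ) (f : Fin n → E → ℝ)
    (hf : ∀ i, Differentiable ℝ (f i)) (w : E) :
    gradient (fun w => (1 / (n : ℝ)) * ∑ i, f i w) w
      = (1 / (n : ℝ)) • ∑ i, gradient (f i) w := by
  have hsum : DifferentiableAt ℝ (fun w => ∑ i, f i w) w :=
    DifferentiableAt.fun_sum fun i _ => (hf i).differentiableAt
  unfold gradient
  rw [fderiv_const_mul hsum, fderiv_fun_sum (fun i _ => (hf i).differentiableAt)]
  simp [map_smul, map_sum]

end Descent

lemma adaptive_aux_endgame (α β c MU D G Sn Bf γ : ℝ)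
    (hβ : 0 < β) (hα : 0 < α) (hc : 0 < c) (hMU : 0 < MU) (hD : 0 < D)
    (hG : 2*α*D ≤ G) (hSn : 0 ≤ Sn) (hSnMU : Sn ≤ MU^2)
    (hB1 : 1 ≤ Bf) (hBc : c/D ≤ Bf)
    (hγ : γ = α/(β*(α+MU^2/(2*c)))) :
    D - γ*G + β/2*γ^2*(Sn/Bf + G) ≤ (1 - α^2/(β*(α+MU^2/(2*c))))*D := by
  set K : ℝ := α + MU^2/(2*c) with hK
  have hKpos : 0 < K := by positivity
  have hBf : 0 < Bf := lt_of_lt_of_le one_pos hB1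
  have hγpos : 0 < γ := by rw [hγ]; positivity
  have hkey : β * K * γ = α := by rw [hγ]; field_simp
  have hβγ : β * γ ≤ 1 := by
    have h0 : (0:ℝ) ≤ MU^2/(2*c) := by positivity
    have hαK : α ≤ K := by rw [hK]; linarith
    nlinarith
  have hαγ : α^2/(β*K) = α*γ := by rw [hγ]; field_simp
  rw [hαγ]
  have hSnB : Sn/Bf ≤ MU^2*D/c := by
    have h1 : 1/Bf ≤ D/c := by
      rw [div_le_div_iff₀ hBf hc]
      calc (1:ℝ)*c = c := one_mul c
        _ ≤ D * Bf := by
            have := (div_le_iff₀ hD).mp hBc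
            nlinarith
    calc Sn/Bf = Sn * (1/Bf) := by ring
      _ ≤ MU^2 * (D/c) := by
          apply mul_le_mul hSnMU h1 (by positivity) (by positivity)
      _ = MU^2*D/c := by ring
  have h2 : β/2*γ^2*(Sn/Bf) ≤ β*γ^2*(K-α)*D := by
    have hKα : K - α = MU^2/(2*c) := by rw [hK]; ring
    rw [hKα]
    calc β/2*γ^2*(Sn/Bf) ≤ β/2*γ^2*(MU^2*D/c) := by
          apply mul_le_mul_of_nonneg_left hSnB (by positivity)
      _ = β*γ^2*(MU^2/(2*c))*D := by ring
  have h3 : -γ*G + β/2*γ^2*G ≤ -(γ*(1-β*γ/2))*(2*α*D) := by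
    have hcoef : 0 ≤ γ*(1-β*γ/2) := by nlinarith
    nlinarith [mul_le_mul_of_nonneg_left hG hcoef]
  have hkey2 : β*γ^2*(K-α) = α*γ - α*β*γ^2 := by linear_combination γ * hkey
  have h2' : β/2*γ^2*(Sn/Bf) ≤ (α*γ - α*β*γ^2)*D := by
    calc β/2*γ^2*(Sn/Bf) ≤ β*γ^2*(K-α)*D := h2
      _ = (α*γ - α*β*γ^2)*D := by rw [hkey2]
  calc D - γ*G + β/2*γ^2*(Sn/Bf + G)
      = D + (β/2*γ^2*(Sn/Bf)) + (-γ*G + β/2*γ^2*G) := by ring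
    _ ≤ D + (α*γ - α*β*γ^2)*D + (-(γ*(1-β*γ/2))*(2*α*D)) := by linarith
    _ = (1 - α*γ)*D := by ring

set_option maxHeartbeats 1000000 in
/-- For `F` β-smooth and α-PL with minimum `F*`, with the adaptive batch size
`B ≥ c/(F(w) − F*)` and step size `γ = α/(β(α + M_U²/(2c)))`, one mini-batch SGD step
contracts the expected suboptimality:
`E_s[F(w − γ g_s(w))] − F* ≤ (1 − α²/(β(α + M_U²/(2c))))·(F(w) − F*)`. -/
theorem adaptive_batch_pl_contraction
    (d n B : ℕ) (hd : 1 ≤ d) (hn : 1 ≤ n) (hB : 1 ≤ B)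
    (f : Fin n → EuclideanSpace ℝ (Fin d) → ℝ)
    (hf : ∀ i, Differentiable ℝ (f i))
    (F : EuclideanSpace ℝ (Fin d) → ℝ)
    (hF : F = fun w => (1 / (n : ℝ)) * ∑ i, f i w)
    (β α : ℝ) (hβ : 0 < β) (hα : 0 < α)
    (hFdiff : Differentiable ℝ F)
    (hsmooth : ∀ x y, ‖gradient F x - gradient F y‖ ≤ β * ‖x - y‖)
    (Fstar : ℝ) (hFstar_le : ∀ v, Fstar ≤ F v) (hFstar_att : ∃ v, F v = Fstar)
    (hPL : ∀ v, α * (F v - Fstar) ≤ (1 / 2) * ‖gradient F v‖ ^ 2)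
    (c MU : ℝ) (hc : 0 < c) (hMU : 0 < MU)
    (w : EuclideanSpace ℝ (Fin d))
    (hw : Fstar < F w)
    (hM : (1 / (n : ℝ)) * ∑ i, ‖gradient (f i) w‖ ^ 2 ≤ MU ^ 2)
    (hBc : c / (F w - Fstar) ≤ (B : ℝ))
    (γ : ℝ) (hγ : γ = α / (β * (α + MU ^ 2 / (2 * c)))) :
    (1 / (n : ℝ) ^ B) *
        ∑ s : Fin B → Fin n,
          F (w - γ • ((1 / (B : ℝ)) • ∑ j, gradient (f (s j)) w))
      - Fstar
      ≤ (1 - α ^ 2 / (β * (α + MU ^ 2 / (2 * c)))) * (F w - Fstar) := by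
  have hn0 : (0:ℝ) < n := by exact_mod_cast hn
  have hB0 : (0:ℝ) < B := by exact_mod_cast hB
  have hγpos : 0 < γ := by
    rw [hγ]
    have : (0:ℝ) < α + MU ^ 2 / (2 * c) := by positivity
    positivity
  set X : Fin n → EuclideanSpace ℝ (Fin d) := fun i => gradient (f i) w with hXdef
  set μ : EuclideanSpace ℝ (Fin d) := gradient F w with hμdef
  have hμ : μ = (1 / (n : ℝ)) • ∑ i, X i := by
    rw [hμdef, hF]
    exact adaptive_aux_gradient_avg n f hf w
  have hXsum : ∑ i, X i = (n : ℝ) • μ := by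
    rw [hμ, smul_smul, mul_one_div, div_self hn0.ne', one_smul]
  -- descent bound for each tuple
  have hdesc : ∀ s : Fin B → Fin n,
      F (w - γ • ((1 / (B : ℝ)) • ∑ j, X (s j)))
        ≤ F w - γ * ⟪μ, (1 / (B : ℝ)) • ∑ j, X (s j)⟫
            + β / 2 * (γ ^ 2 * ‖(1 / (B : ℝ)) • ∑ j, X (s j)‖ ^ 2) := by
    intro s
    have h := adaptive_aux_descent F hFdiff β hβ hsmooth w
      (-(γ • ((1 / (B : ℝ)) • ∑ j, X (s j))))
    have he : w + -(γ • ((1 / (B : ℝ)) • ∑ j, X (s j)))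
        = w - γ • ((1 / (B : ℝ)) • ∑ j, X (s j)) := by module
    rw [he] at h
    calc F (w - γ • ((1 / (B : ℝ)) • ∑ j, X (s j)))
        ≤ F w + ⟪μ, -(γ • ((1 / (B : ℝ)) • ∑ j, X (s j)))⟫
            + β / 2 * ‖-(γ • ((1 / (B : ℝ)) • ∑ j, X (s j)))‖ ^ 2 := h
      _ = F w - γ * ⟪μ, (1 / (B : ℝ)) • ∑ j, X (s j)⟫
            + β / 2 * (γ ^ 2 * ‖(1 / (B : ℝ)) • ∑ j, X (s j)‖ ^ 2) := by
          rw [inner_neg_right, real_inner_smul_right, norm_neg, norm_smul]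
          rw [Real.norm_eq_abs, abs_of_pos hγpos]
          ring
  have hsum_le : ∑ s : Fin B → Fin n, F (w - γ • ((1 / (B : ℝ)) • ∑ j, X (s j)))
      ≤ ∑ s : Fin B → Fin n,
          (F w - γ * ⟪μ, (1 / (B : ℝ)) • ∑ j, X (s j)⟫
            + β / 2 * (γ ^ 2 * ‖(1 / (B : ℝ)) • ∑ j, X (s j)‖ ^ 2)) :=
    Finset.sum_le_sum fun s _ => hdesc s
  -- first moment
  have hA : ∑ s : Fin B → Fin n, ⟪μ, (1 / (B : ℝ)) • ∑ j, X (s j)⟫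
      = (n : ℝ) ^ B * ‖μ‖ ^ 2 := by
    simp_rw [real_inner_smul_right]
    rw [← Finset.mul_sum, ← inner_sum, adaptive_aux_tuple_sum_first, hXsum,
      real_inner_smul_right, real_inner_smul_right, real_inner_self_eq_norm_sq]
    field_simp
  -- second moment
  set Sn : ℝ := (1 / (n : ℝ)) * ∑ i, ‖X i‖ ^ 2 with hSndef
  have hSnnonneg : 0 ≤ Sn := by
    rw [hSndef]
    apply mul_nonneg (by positivity)
    exact Finset.sum_nonneg fun i _ => by positivity
  have hC : ∑ s : Fin B → Fin n, ‖(1 / (B : ℝ)) • ∑ j, X (s j)‖ ^ 2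
      ≤ (n : ℝ) ^ B * ((1 / (B : ℝ)) * Sn + ‖μ‖ ^ 2) := by
    have heq : ∑ s : Fin B → Fin n, ‖(1 / (B : ℝ)) • ∑ j, X (s j)‖ ^ 2
        = (1 / (B : ℝ)) ^ 2 * ∑ s : Fin B → Fin n, ‖∑ j, X (s j)‖ ^ 2 := by
      rw [Finset.mul_sum]
      congr 1
      ext s
      rw [norm_smul, mul_pow, Real.norm_eq_abs, sq_abs]
    rw [heq, adaptive_aux_tuple_sum_normsq, hXsum, norm_smul, Real.norm_eq_abs,
      abs_of_pos hn0]
    have hexp : (1 / (B : ℝ)) ^ 2 * ((n : ℝ) ^ B * (((B : ℝ) / n) * ∑ a, ‖X a‖ ^ 2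
          + ((B : ℝ) * ((B : ℝ) - 1) / (n : ℝ) ^ 2) * ((n:ℝ) * ‖μ‖) ^ 2))
        = (n : ℝ) ^ B * ((1 / (B : ℝ)) * Sn + (((B:ℝ)-1)/(B:ℝ)) * ‖μ‖ ^ 2) := by
      rw [hSndef]
      field_simp
    rw [hexp]
    have hfrac : (((B:ℝ)-1)/(B:ℝ)) * ‖μ‖ ^ 2 ≤ ‖μ‖ ^ 2 := by
      apply mul_le_of_le_one_left (by positivity)
      rw [div_le_one hB0]
      linarith
    have hnB : (0:ℝ) ≤ (n : ℝ) ^ B := by positivity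
    nlinarith [hnB, hfrac]
  -- sum of the RHS
  have hRHS : ∑ s : Fin B → Fin n,
      (F w - γ * ⟪μ, (1 / (B : ℝ)) • ∑ j, X (s j)⟫
        + β / 2 * (γ ^ 2 * ‖(1 / (B : ℝ)) • ∑ j, X (s j)‖ ^ 2))
      ≤ (n : ℝ) ^ B * (F w - γ * ‖μ‖ ^ 2
          + β / 2 * γ ^ 2 * ((1 / (B : ℝ)) * Sn + ‖μ‖ ^ 2)) := by
    rw [Finset.sum_add_distrib, Finset.sum_sub_distrib, Finset.sum_const,
      ← Finset.mul_sum, ← Finset.mul_sum, hA]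
    simp only [Finset.card_univ, Fintype.card_fun, Fintype.card_fin, nsmul_eq_mul]
    have h1 : β / 2 * ∑ s : Fin B → Fin n, γ ^ 2 * ‖(1 / (B : ℝ)) • ∑ j, X (s j)‖ ^ 2
        ≤ β / 2 * γ ^ 2 * ((n : ℝ) ^ B * ((1 / (B : ℝ)) * Sn + ‖μ‖ ^ 2)) := by
      rw [← Finset.mul_sum]
      calc β / 2 * (γ ^ 2 * ∑ s : Fin B → Fin n, ‖(1 / (B : ℝ)) • ∑ j, X (s j)‖ ^ 2)
          ≤ β / 2 * (γ ^ 2 * ((n : ℝ) ^ B * ((1 / (B : ℝ)) * Sn + ‖μ‖ ^ 2))) := by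
            apply mul_le_mul_of_nonneg_left _ (by positivity)
            exact mul_le_mul_of_nonneg_left hC (by positivity)
        _ = β / 2 * γ ^ 2 * ((n : ℝ) ^ B * ((1 / (B : ℝ)) * Sn + ‖μ‖ ^ 2)) := by ring
    push_cast
    nlinarith [h1]
  -- combine
  have hnB0 : (0:ℝ) < (n : ℝ) ^ B := by positivity
  have hE : (1 / (n : ℝ) ^ B) *
      ∑ s : Fin B → Fin n, F (w - γ • ((1 / (B : ℝ)) • ∑ j, X (s j)))
      ≤ F w - γ * ‖μ‖ ^ 2 + β / 2 * γ ^ 2 * ((1 / (B : ℝ)) * Sn + ‖μ‖ ^ 2) := by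
    rw [div_mul_eq_mul_div, one_mul, div_le_iff₀ hnB0] 
    calc ∑ s : Fin B → Fin n, F (w - γ • ((1 / (B : ℝ)) • ∑ j, X (s j)))
        ≤ (n : ℝ) ^ B * (F w - γ * ‖μ‖ ^ 2
            + β / 2 * γ ^ 2 * ((1 / (B : ℝ)) * Sn + ‖μ‖ ^ 2)) := le_trans hsum_le hRHS
      _ = (F w - γ * ‖μ‖ ^ 2 + β / 2 * γ ^ 2 * ((1 / (B : ℝ)) * Sn + ‖μ‖ ^ 2)) * (n : ℝ) ^ B := by
          ring
  -- final arithmetic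
  have hD : 0 < F w - Fstar := by linarith
  have hG : 2 * α * (F w - Fstar) ≤ ‖μ‖ ^ 2 := by
    have := hPL w
    rw [← hμdef] at this
    linarith
  have hfinal := adaptive_aux_endgame α β c MU (F w - Fstar) (‖μ‖ ^ 2) Sn (B : ℝ) γ
    hβ hα hc hMU hD hG hSnnonneg (by rw [hSndef]; exact hM) (by exact_mod_cast hB) hBc hγ
  calc (1 / (n : ℝ) ^ B) *
        ∑ s : Fin B → Fin n, F (w - γ • ((1 / (B : ℝ)) • ∑ j, X (s j))) - Fstar
      ≤ (F w - γ * ‖μ‖ ^ 2 + β / 2 * γ ^ 2 * ((1 / (B : ℝ)) * Sn + ‖μ‖ ^ 2)) - Fstar := by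
        linarith [hE]
    _ = (F w - Fstar) - γ * ‖μ‖ ^ 2 + β / 2 * γ ^ 2 * (Sn / (B : ℝ) + ‖μ‖ ^ 2) := by
        ring
    _ ≤ (1 - α ^ 2 / (β * (α + MU ^ 2 / (2 * c)))) * (F w - Fstar) := hfinal
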